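/- arXiv:2104.04841 — 4 statements merged into one kernel-verified Lean document; each statement's English description precedes it below -/
import Mathlib

section
/- Let S = 4231213124121312143121312412131231423121312412131214312131241213121 over {1,2,3,4}. Then for every letter x ∈ {1,2,3,4}, the word S·x contains a square, and the word obtained from S by inserting x at the penultimate position (i.e. S'·x·ℓ where S = S'·ℓ and ℓ is the last letter of S) also contains a square. Hence S cannot be extended to a square-free word at its last or penultimate position. -/
def HasSquare (W : List ℕ) : Prop := ∃ X : List ℕ, X ≠ [] ∧ X ++ X <:+: W

def SquareFree (W : List ℕ) : Prop := ¬ HasSquare W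

theorem S_not_extendable_last_two :
    ∀ x ∈ ({1, 2, 3, 4} : Set ℕ),
      HasSquare ([4, 2, 3, 1, 2, 1, 3, 1, 2, 4, 1, 2, 1, 3, 1, 2, 1, 4, 3, 1, 2, 1, 3, 1, 2, 4, 1, 2, 1, 3, 1, 2, 3, 1, 4, 2, 3, 1, 2, 1, 3, 1, 2, 4, 1, 2, 1, 3, 1, 2, 1, 4, 3, 1, 2, 1, 3, 1, 2, 4, 1, 2, 1, 3, 1, 2, 1] ++ [x]) ∧
      ∀ S' ℓ, ([4, 2, 3, 1, 2, 1, 3, 1, 2, 4, 1, 2, 1, 3, 1, 2, 1, 4, 3, 1, 2, 1, 3, 1, 2, 4, 1, 2, 1, 3, 1, 2, 3, 1, 4, 2, 3, 1, 2, 1, 3, 1, 2, 4, 1, 2, 1, 3, 1, 2, 1, 4, 3, 1, 2, 1, 3, 1, 2, 4, 1, 2, 1, 3, 1, 2, 1] : List ℕ) = S' ++ [ℓ] →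
        HasSquare (S' ++ [x, ℓ]) := by
  intro x hx
  rcases hx with rfl | rfl | rfl | rfl
  · constructor
    exact ⟨[1], by decide, [4, 2, 3, 1, 2, 1, 3, 1, 2, 4, 1, 2, 1, 3, 1, 2, 1, 4, 3, 1, 2, 1, 3, 1, 2, 4, 1, 2, 1, 3, 1, 2, 3, 1, 4, 2, 3, 1, 2, 1, 3, 1, 2, 4, 1, 2, 1, 3, 1, 2, 1, 4, 3, 1, 2, 1, 3, 1, 2, 4, 1, 2, 1, 3, 1, 2], [], rfl⟩
    intro S' ℓ h
    have h' : ([4, 2, 3, 1, 2, 1, 3, 1, 2, 4, 1, 2, 1, 3, 1, 2, 1, 4, 3, 1, 2, 1, 3, 1, 2, 4, 1, 2, 1, 3, 1, 2, 3, 1, 4, 2, 3, 1, 2, 1, 3, 1, 2, 4, 1, 2, 1, 3, 1, 2, 1, 4, 3, 1, 2, 1, 3, 1, 2, 4, 1, 2, 1, 3, 1, 2] : List ℕ) ++ [1] = S' ++ [ℓ] := h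
    obtain ⟨h1, h2⟩ := List.append_inj' h' rfl
    obtain rfl : ℓ = 1 := (List.cons.injEq ..).mp h2.symm |>.1
    subst h1
    exact ⟨[1], by decide, [4, 2, 3, 1, 2, 1, 3, 1, 2, 4, 1, 2, 1, 3, 1, 2, 1, 4, 3, 1, 2, 1, 3, 1, 2, 4, 1, 2, 1, 3, 1, 2, 3, 1, 4, 2, 3, 1, 2, 1, 3, 1, 2, 4, 1, 2, 1, 3, 1, 2, 1, 4, 3, 1, 2, 1, 3, 1, 2, 4, 1, 2, 1, 3, 1, 2], [], rfl⟩
  · constructor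
    exact ⟨[1, 2], by decide, [4, 2, 3, 1, 2, 1, 3, 1, 2, 4, 1, 2, 1, 3, 1, 2, 1, 4, 3, 1, 2, 1, 3, 1, 2, 4, 1, 2, 1, 3, 1, 2, 3, 1, 4, 2, 3, 1, 2, 1, 3, 1, 2, 4, 1, 2, 1, 3, 1, 2, 1, 4, 3, 1, 2, 1, 3, 1, 2, 4, 1, 2, 1, 3], [], rfl⟩
    intro S' ℓ h
    have h' : ([4, 2, 3, 1, 2, 1, 3, 1, 2, 4, 1, 2, 1, 3, 1, 2, 1, 4, 3, 1, 2, 1, 3, 1, 2, 4, 1, 2, 1, 3, 1, 2, 3, 1, 4, 2, 3, 1, 2, 1, 3, 1, 2, 4, 1, 2, 1, 3, 1, 2, 1, 4, 3, 1, 2, 1, 3, 1, 2, 4, 1, 2, 1, 3, 1, 2] : List ℕ) ++ [1] = S' ++ [ℓ] := h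
    obtain ⟨h1, h2⟩ := List.append_inj' h' rfl
    obtain rfl : ℓ = 1 := (List.cons.injEq ..).mp h2.symm |>.1
    subst h1
    exact ⟨[2], by decide, [4, 2, 3, 1, 2, 1, 3, 1, 2, 4, 1, 2, 1, 3, 1, 2, 1, 4, 3, 1, 2, 1, 3, 1, 2, 4, 1, 2, 1, 3, 1, 2, 3, 1, 4, 2, 3, 1, 2, 1, 3, 1, 2, 4, 1, 2, 1, 3, 1, 2, 1, 4, 3, 1, 2, 1, 3, 1, 2, 4, 1, 2, 1, 3, 1], [1], rfl⟩
  · constructor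
    exact ⟨[1, 2, 1, 3], by decide, [4, 2, 3, 1, 2, 1, 3, 1, 2, 4, 1, 2, 1, 3, 1, 2, 1, 4, 3, 1, 2, 1, 3, 1, 2, 4, 1, 2, 1, 3, 1, 2, 3, 1, 4, 2, 3, 1, 2, 1, 3, 1, 2, 4, 1, 2, 1, 3, 1, 2, 1, 4, 3, 1, 2, 1, 3, 1, 2, 4], [], rfl⟩
    intro S' ℓ h
    have h' : ([4, 2, 3, 1, 2, 1, 3, 1, 2, 4, 1, 2, 1, 3, 1, 2, 1, 4, 3, 1, 2, 1, 3, 1, 2, 4, 1, 2, 1, 3, 1, 2, 3, 1, 4, 2, 3, 1, 2, 1, 3, 1, 2, 4, 1, 2, 1, 3, 1, 2, 1, 4, 3, 1, 2, 1, 3, 1, 2, 4, 1, 2, 1, 3, 1, 2] : List ℕ) ++ [1] = S' ++ [ℓ] := h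
    obtain ⟨h1, h2⟩ := List.append_inj' h' rfl
    obtain rfl : ℓ = 1 := (List.cons.injEq ..).mp h2.symm |>.1
    subst h1
    exact ⟨[4, 2, 3, 1, 2, 1, 3, 1, 2, 4, 1, 2, 1, 3, 1, 2, 1, 4, 3, 1, 2, 1, 3, 1, 2, 4, 1, 2, 1, 3, 1, 2, 3, 1], by decide, [], [], rfl⟩
  · constructor
    exact ⟨[3, 1, 2, 1, 3, 1, 2, 4, 1, 2, 1, 3, 1, 2, 1, 4], by decide, [4, 2, 3, 1, 2, 1, 3, 1, 2, 4, 1, 2, 1, 3, 1, 2, 1, 4, 3, 1, 2, 1, 3, 1, 2, 4, 1, 2, 1, 3, 1, 2, 3, 1, 4, 2], [], rfl⟩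
    intro S' ℓ h
    have h' : ([4, 2, 3, 1, 2, 1, 3, 1, 2, 4, 1, 2, 1, 3, 1, 2, 1, 4, 3, 1, 2, 1, 3, 1, 2, 4, 1, 2, 1, 3, 1, 2, 3, 1, 4, 2, 3, 1, 2, 1, 3, 1, 2, 4, 1, 2, 1, 3, 1, 2, 1, 4, 3, 1, 2, 1, 3, 1, 2, 4, 1, 2, 1, 3, 1, 2] : List ℕ) ++ [1] = S' ++ [ℓ] := h
    obtain ⟨h1, h2⟩ := List.append_inj' h' rfl
    obtain rfl : ℓ = 1 := (List.cons.injEq ..).mp h2.symm |>.1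
    subst h1
    exact ⟨[1, 2, 1, 3, 1, 2, 4], by decide, [4, 2, 3, 1, 2, 1, 3, 1, 2, 4, 1, 2, 1, 3, 1, 2, 1, 4, 3, 1, 2, 1, 3, 1, 2, 4, 1, 2, 1, 3, 1, 2, 3, 1, 4, 2, 3, 1, 2, 1, 3, 1, 2, 4, 1, 2, 1, 3, 1, 2, 1, 4, 3], [1], rfl⟩
end

section
/- For every n ≥ 1, the Zimin word Z_n is square-free. -/
def Zimin : ℕ → List ℕ
  | 0 => []
  | n + 1 => Zimin n ++ (n + 1) :: Zimin n

lemma mem_zimin_le {n m : ℕ} (h : m ∈ Zimin n) : m ≤ n := by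
  induction n with
  | zero => simp [Zimin] at h
  | succ k ih =>
    simp only [Zimin, List.mem_append, List.mem_cons] at h
    rcases h with h | h | h
    · exact (ih h).trans (Nat.le_succ k)
    · omega
    · exact (ih h).trans (Nat.le_succ k)

lemma not_mem_zimin (n : ℕ) : (n + 1) ∉ Zimin n := fun h => by
  have := mem_zimin_le h; omega

lemma infix_split {w a c : List ℕ} {b : ℕ} (h : w <:+: a ++ b :: c)
    (hb : b ∉ w) : w <:+: a ∨ w <:+: c := by
  obtain ⟨s, t, hst⟩ := h
  by_cases h1 : s.length + w.length ≤ a.length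
  · left
    have hpre : s ++ w <+: a ++ b :: c := ⟨t, by simpa [List.append_assoc] using hst⟩
    have hpre2 : s ++ w <+: a :=
      List.prefix_of_prefix_length_le hpre (a.prefix_append _)
        (by simpa using h1)
    exact (List.suffix_append s w).isInfix.trans hpre2.isInfix
  · by_cases h2 : a.length + 1 ≤ s.length
    · right
      have hsuf : w ++ t <:+ (a ++ [b]) ++ c := ⟨s, by simpa [List.append_assoc] using hst⟩
      have hlen : (w ++ t).length ≤ c.length := by
        have := congrArg List.length hst
        simp [List.length_append] at this ⊢
        omega
      have hsuf2 : w ++ t <:+ c :=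
        List.suffix_of_suffix_length_le hsuf (List.suffix_append (a ++ [b]) c) hlen
      exact (w.prefix_append t).isInfix.trans hsuf2.isInfix
    · exfalso
      apply hb
      push_neg at h1 h2
      rw [List.append_assoc] at hst
      have hlt' : a.length < (a ++ b :: c).length := by simp
      have e1 : (a ++ b :: c)[a.length]'hlt' = b := by
        rw [List.getElem_append_right (le_refl _)]
        simp
      have e2 := List.getElem_of_eq hst (by rw [hst]; exact hlt')
      rw [e1] at e2
      rw [List.getElem_append_right (by omega)] at e2
      have hlt2 : a.length - s.length < w.length := by omega
      rw [List.getElem_append_left hlt2] at e2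
      exact e2 ▸ List.getElem_mem _

lemma zimin_sf (n : ℕ) : SquareFree (Zimin n) := by
  induction n with
  | zero =>
    rintro ⟨X, hX, hinf⟩
    have h := hinf.sublist.length_le
    simp only [Zimin, List.length_append, List.length_nil] at h
    exact hX (List.length_eq_zero_iff.mp (by omega))
  | succ k ih =>
    rintro ⟨X, hX, hinf⟩
    by_cases hmem : (k + 1) ∈ X
    · have hcount : (Zimin (k + 1)).count (k + 1) = 1 := by
        simp [Zimin, List.count_append, List.count_cons,
          List.count_eq_zero.mpr (not_mem_zimin k)]
      have h2 : 2 ≤ (X ++ X).count (k + 1) := by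
        rw [List.count_append]
        have := List.count_pos_iff.mpr hmem
        omega
      have := hinf.sublist.count_le (k + 1)
      omega
    · have hmem' : (k + 1) ∉ X ++ X := by simp [hmem]
      rcases infix_split (by simpa [Zimin] using hinf) hmem' with h | h
      · exact ih ⟨X, hX, h⟩
      · exact ih ⟨X, hX, h⟩

theorem zimin_squarefree (n : ℕ) (hn : 1 ≤ n) : SquareFree (Zimin n) := zimin_sf n
end

section
/- For n ≥ 2, the number of internal positions i (with 1 ≤ i ≤ 2^n − 2, meaning insertion strictly between the i-th and (i+1)-th letters of Z_n) such that inserting the letter n at position i into the Zimin word Z_n yields a square-free word is exactly (2^n − 2) − 2(n − 1). -/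
def nu (j : ℕ) : ℕ := padicValNat 2 j

lemma nu_pow_mul_odd {c u : ℕ} (hu : Odd u) : nu (2 ^ c * u) = c := by
  have hu0 : u ≠ 0 := by rintro rfl; simp at hu
  have h2 : ¬ (2 ∣ u) := by
    rcases hu with ⟨v, rfl⟩; omega
  unfold nu
  rw [padicValNat.mul (by positivity) hu0, padicValNat.prime_pow,
    padicValNat.eq_zero_of_not_dvd h2, add_zero]

lemma nu_decomp {j : ℕ} (hj : j ≠ 0) : ∃ c u, Odd u ∧ j = 2 ^ c * u ∧ nu j = c := by
  obtain ⟨k, m, hm, rfl⟩ := Nat.exists_eq_two_pow_mul_odd hj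
  exact ⟨k, m, hm, rfl, nu_pow_mul_odd hm⟩

lemma nu_two_pow (c : ℕ) : nu (2 ^ c) = c := by
  simpa using nu_pow_mul_odd (c := c) (u := 1) (by decide)

/-- adding a multiple of `2^k` doesn't change `nu` of a small number -/
lemma nu_add_of_lt {M t k : ℕ} (hM : 2 ^ k ∣ M) (ht : 1 ≤ t) (htk : t < 2 ^ k) :
    nu (M + t) = nu t := by
  obtain ⟨c, u, hu, hju, hc⟩ := nu_decomp (j := t) (by omega)
  obtain ⟨M', rfl⟩ := hM
  have hck : c < k := by
    have h1 : 2 ^ c ≤ t := by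
      have := hu.pos
      calc 2 ^ c ≤ 2 ^ c * u := Nat.le_mul_of_pos_right _ this
      _ = t := hju.symm
    have := htk
    by_contra h
    push_neg at h
    have : (2:ℕ) ^ k ≤ 2 ^ c := Nat.pow_le_pow_right (by norm_num) h
    omega
  have key : 2 ^ k * M' + t = 2 ^ c * (2 ^ (k - c) * M' + u) := by
    have h2k : (2:ℕ) ^ k = 2 ^ c * 2 ^ (k - c) := by
      rw [← pow_add]; congr 1; omega
    rw [hju, h2k]; ring
  rw [key, hc, nu_pow_mul_odd]
  rcases hu with ⟨v, rfl⟩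
  have : ∃ w, 2 ^ (k - c) * M' = 2 * w := by
    have : 1 ≤ k - c := by omega
    exact ⟨2 ^ (k - c - 1) * M', by rw [← Nat.mul_assoc, ← pow_succ']; congr 2; omega⟩
  obtain ⟨w, hw⟩ := this
  exact ⟨w + v, by omega⟩

/-- odd shift always changes nu -/
lemma nu_ne_odd_shift {e j : ℕ} (he : Odd e) (hj : 1 ≤ j) : nu j ≠ nu (j + e) := by
  rcases Nat.even_or_odd j with hjE | hjO
  · -- j even : nu j ≥ 1, j+e odd : nu = 0
    have h1 : nu (j + e) = 0 := by
      have : Odd (j + e) := hjE.add_odd he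
      rcases this with ⟨v, hv⟩
      simpa using nu_pow_mul_odd (c := 0) (u := j + e) ⟨v, hv⟩
    have h2 : nu j ≠ 0 := by
      obtain ⟨c, u, hu, hju, hc⟩ := nu_decomp (j := j) (by omega)
      rcases hu with ⟨v, rfl⟩
      rcases Nat.eq_zero_or_pos c with rfl | hcp
      · exfalso; rcases hjE with ⟨w, hw⟩; simp at hju; omega
      · omega
    omega
  · have h1 : nu j = 0 := by
      rcases hjO with ⟨v, hv⟩
      simpa using nu_pow_mul_odd (c := 0) (u := j) ⟨v, hv⟩
    have h2 : nu (j + e) ≠ 0 := by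
      have hE : Even (j + e) := hjO.add_odd he
      obtain ⟨c, u, hu, hju, hc⟩ := nu_decomp (j := j + e) (by rcases he with ⟨v,hv⟩; omega)
      rcases Nat.eq_zero_or_pos c with rfl | hcp
      · exfalso; rcases hE with ⟨w, hw⟩; rcases hu with ⟨v, hv⟩; simp at hju; omega
      · omega
    omega

lemma nu_odd {j : ℕ} (hj : Odd j) : nu j = 0 := by
  simpa using nu_pow_mul_odd (c := 0) (u := j) hj

lemma nu_two_pow_mul {b q : ℕ} (hq : q ≠ 0) : nu (2 ^ b * q) = b + nu q := by
  obtain ⟨c, u, hu, rfl, hc⟩ := nu_decomp hq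
  have : 2 ^ b * (2 ^ c * u) = 2 ^ (b + c) * u := by ring
  rw [this, nu_pow_mul_odd hu, hc]

lemma exists_mod_in_window (M r u : ℕ) (hM : 0 < M) (hr : r < M) :
    ∃ j, u ≤ j ∧ j < u + M ∧ j % M = r := by
  set a := u + (M - 1 - r) with ha
  refine ⟨M * (a / M) + r, ?_, ?_, ?_⟩
  · have h1 := Nat.div_add_mod a M
    have h2 := Nat.mod_lt a hM
    omega
  · have h1 := Nat.div_add_mod a M
    have h2 := Nat.mod_lt a hM
    omega
  · rw [Nat.mul_add_mod, Nat.mod_eq_of_lt hr]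

/-- LemC : for even `e`, any window of length `2^(nu e + 1)` contains a violation. -/
lemma lemC {e u : ℕ} (he0 : e ≠ 0) (hu : 1 ≤ u) :
    ∃ j, u ≤ j ∧ j < u + 2 ^ (nu e + 1) ∧ nu j ≠ nu (j + e) := by
  obtain ⟨b, qe, hqe, hee, hb⟩ := nu_decomp he0
  obtain ⟨j, hj1, hj2, hj3⟩ := exists_mod_in_window (2 ^ (b + 1)) (2 ^ b) u
    (by positivity) (by have : (2:ℕ)^b < 2^(b+1) := by
                          exact Nat.pow_lt_pow_right (by norm_num) (by omega)
                        exact this)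
  refine ⟨j, hj1, by rw [hb]; omega, ?_⟩
  have hdm := Nat.div_add_mod j (2 ^ (b+1))
  rw [hj3] at hdm
  obtain ⟨x, hx⟩ : ∃ x, j / 2 ^ (b+1) = x := ⟨_, rfl⟩
  rw [hx] at hdm
  have hjform : j = 2 ^ b * (2 * x + 1) := by
    calc j = 2 ^ (b+1) * x + 2 ^ b := hdm.symm
    _ = 2 ^ b * (2 * x + 1) := by ring
  have hnuj : nu j = b := by
    rw [hjform, nu_pow_mul_odd ⟨x, by ring⟩]
  have hsum : j + e = 2 ^ b * (2 * x + 1 + qe) := by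
    rw [hjform, hee]; ring
  have heven : ∃ w, 2 * x + 1 + qe = 2 * w := by
    rcases hqe with ⟨v, hv⟩; exact ⟨x + v + 1, by omega⟩
  obtain ⟨w, hw⟩ := heven
  have hw0 : w ≠ 0 := by rcases hqe with ⟨v,hv⟩; omega
  have : nu (j + e) = b + (1 + nu w) := by
    rw [hsum, hw, nu_two_pow_mul (by omega)]
    congr 1
    have : 2 * w = 2 ^ 1 * w := by ring
    rw [this, nu_two_pow_mul hw0]
  omega

/-- LemD : for `e = 2^b`, any window of length `2^b` contains a violation. -/
lemma lemD {b u : ℕ} (hu : 1 ≤ u) :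
    ∃ j, u ≤ j ∧ j < u + 2 ^ b ∧ nu j ≠ nu (j + 2 ^ b) := by
  obtain ⟨j, hj1, hj2, hj3⟩ := exists_mod_in_window (2 ^ b) 0 u (by positivity) (by positivity)
  refine ⟨j, hj1, hj2, ?_⟩
  have hq := Nat.div_add_mod j (2 ^ b)
  rw [hj3] at hq
  obtain ⟨q, hjq⟩ : ∃ q, j = 2 ^ b * q := ⟨j / 2 ^ b, by omega⟩
  have hq0 : q ≠ 0 := by
    rintro h; rw [h, Nat.mul_zero] at hjq; omega
  have hs : j + 2 ^ b = 2 ^ b * (q + 1) := by rw [hjq]; ring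
  have nonzero_nu : ∀ x : ℕ, Even x → x ≠ 0 → nu x ≠ 0 := by
    intro x hE hx0
    obtain ⟨c, v, hv, hxv, hc⟩ := nu_decomp hx0
    rcases Nat.eq_zero_or_pos c with rfl | hcp
    · exfalso; rcases hE with ⟨w,hw⟩; rcases hv with ⟨y,hy⟩; simp at hxv; omega
    · omega
  rcases Nat.even_or_odd q with hE | hO
  · have h1 : nu (j + 2 ^ b) = b := by
      rw [hs, nu_pow_mul_odd (hE.add_one)]
    have h2 : nu j = b + nu q := by rw [hjq, nu_two_pow_mul hq0]
    have h3 : nu q ≠ 0 := nonzero_nu q hE hq0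
    omega
  · have h1 : nu j = b := by rw [hjq, nu_pow_mul_odd hO]
    have h2 : nu (j + 2 ^ b) = b + nu (q+1) := by
      rw [hs, nu_two_pow_mul (show q + 1 ≠ 0 by omega)]
    have h3 : nu (q+1) ≠ 0 := nonzero_nu (q+1) (hO.add_one) (by omega)
    omega

lemma odd_ge_three {q : ℕ} (hq : Odd q) (h1 : q ≠ 1) : 3 ≤ q := by
  rcases hq with ⟨v, hv⟩; omega

/-- no square in the ruler sequence -/
lemma lemSq {u d : ℕ} (hu : 1 ≤ u) (hd : 1 ≤ d) :
    ¬ (∀ t, t < d → nu (u + t) = nu (u + t + d)) := by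
  intro H
  have key : ∀ j, u ≤ j → j < u + d → nu j = nu (j + d) := by
    intro j h1 h2
    have := H (j - u) (by omega)
    rw [show u + (j - u) = j by omega] at this
    exact this
  obtain ⟨k, q, hq, hdq, hk⟩ := nu_decomp (j := d) (by omega)
  have h2k : (1:ℕ) ≤ 2 ^ k := Nat.one_le_two_pow
  have h2k1 : (2:ℕ) ^ (k+1) = 2 * 2 ^ k := by rw [pow_succ]; ring
  rcases eq_or_ne q 1 with rfl | hq1
  · rw [Nat.mul_one] at hdq
    obtain ⟨j, hj1, hj2, hj3⟩ := lemD (b := k) (u := u) hu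
    rw [← hdq] at hj2 hj3
    exact hj3 (key j hj1 hj2)
  · have hq3 : 3 ≤ q := odd_ge_three hq hq1
    have hd3 : 3 * 2 ^ k ≤ d := by
      rw [hdq]
      calc 3 * 2 ^ k = 2 ^ k * 3 := by ring
      _ ≤ 2 ^ k * q := Nat.mul_le_mul_left _ hq3
    obtain ⟨j, hj1, hj2, hj3⟩ := lemC (e := d) (u := u) (by omega) hu
    rw [hk] at hj2
    exact hj3 (key j hj1 (by omega))

/-- the almost-square analysis: two runs with shifts d-1 and d force d to be a power of 2 -/
lemma lgen {d a1 b1 c1 e1 : ℕ} (hd : 1 ≤ d) (ha : 1 ≤ a1) (hc : 1 ≤ c1)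
    (H1 : ∀ j, a1 ≤ j → j ≤ b1 → nu j = nu (j + (d - 1)))
    (H2 : ∀ j, c1 ≤ j → j ≤ e1 → nu j = nu (j + d))
    (hlen1 : b1 < a1 → c1 + (d - 1) ≤ e1 + 1)
    (hlen2 : e1 < c1 → a1 + (d - 1) ≤ b1 + 1) :
    ∃ k, d = 2 ^ k := by
  obtain ⟨k, q, hq, hdq, hk⟩ := nu_decomp (j := d) (by omega)
  rcases eq_or_ne q 1 with rfl | hq1
  · exact ⟨k, by rw [hdq, Nat.mul_one]⟩
  exfalso
  have hq3 : 3 ≤ q := odd_ge_three hq hq1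
  have h2k : (1:ℕ) ≤ 2 ^ k := Nat.one_le_two_pow
  have h2k1 : (2:ℕ) ^ (k+1) = 2 * 2 ^ k := by rw [pow_succ]; ring
  have hd3 : 3 * 2 ^ k ≤ d := by
    rw [hdq]
    calc 3 * 2 ^ k = 2 ^ k * 3 := by ring
    _ ≤ 2 ^ k * q := Nat.mul_le_mul_left _ hq3
  rcases Nat.eq_zero_or_pos k with rfl | hk1
  · -- d odd, d = q ≥ 3
    have hdodd : Odd d := by rw [hdq]; simpa using hq
    have hE : e1 < c1 := by
      by_contra h
      push_neg at h
      exact nu_ne_odd_shift hdodd hc (H2 c1 le_rfl h)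
    have hlen := hlen2 hE
    -- interval [a1, b1] has length ≥ d-1, shift d-1 even
    obtain ⟨kb, qb, hqb, hdb, hkb⟩ := nu_decomp (j := d - 1) (by omega)
    have h2kb : (1:ℕ) ≤ 2 ^ kb := Nat.one_le_two_pow
    have h2kb1 : (2:ℕ) ^ (kb+1) = 2 * 2 ^ kb := by rw [pow_succ]; ring
    rcases eq_or_ne qb 1 with rfl | hqb1
    · rw [Nat.mul_one] at hdb
      obtain ⟨j, hj1, hj2, hj3⟩ := lemD (b := kb) (u := a1) ha
      rw [← hdb] at hj2 hj3
      exact hj3 (H1 j hj1 (by omega))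
    · have hqb3 : 3 ≤ qb := odd_ge_three hqb hqb1
      have hdb3 : 3 * 2 ^ kb ≤ d - 1 := by
        rw [hdb]
        calc 3 * 2 ^ kb = 2 ^ kb * 3 := by ring
        _ ≤ 2 ^ kb * qb := Nat.mul_le_mul_left _ hqb3
      obtain ⟨j, hj1, hj2, hj3⟩ := lemC (e := d - 1) (u := a1) (by omega) ha
      rw [hkb] at hj2
      exact hj3 (H1 j hj1 (by omega))
  · -- d even
    have hdodd : Odd (d - 1) := by
      have : Even d := by
        have h : (2:ℕ) ^ k = 2 * 2 ^ (k-1) := by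
          rw [← pow_succ']; congr 1; omega
        rw [hdq, h, Nat.mul_assoc]
        exact even_two_mul _
      rcases this with ⟨w, hw⟩
      exact ⟨w - 1, by omega⟩
    have hE : b1 < a1 := by
      by_contra h
      push_neg at h
      exact nu_ne_odd_shift hdodd ha (H1 a1 le_rfl h)
    have hlen := hlen1 hE
    obtain ⟨j, hj1, hj2, hj3⟩ := lemC (e := d) (u := c1) (by omega) hc
    rw [hk] at hj2
    exact hj3 (H2 j hj1 (by omega))

def insertAt (W : List ℕ) (p x : ℕ) : List ℕ := W.take p ++ x :: W.drop p

lemma zimin_eq (n : ℕ) : Zimin n = (List.range (2 ^ n - 1)).map (fun t => nu (t + 1) + 1) := by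
  induction n with
  | zero => simp [Zimin]
  | succ n ih =>
    have hA : 2 ^ (n+1) - 1 = (2 ^ n - 1) + (1 + (2 ^ n - 1)) := by
      have : (1:ℕ) ≤ 2 ^ n := Nat.one_le_two_pow
      rw [pow_succ]; omega
    rw [show Zimin (n+1) = Zimin n ++ (n + 1) :: Zimin n from rfl, hA, List.range_add,
      List.map_append, ih]
    congr 1
    rw [show 1 + (2 ^ n - 1) = (2 ^ n - 1) + 1 by omega,
      List.range_succ_eq_map, List.map_cons, List.map_cons, List.map_map, List.map_map]
    have h1 : (1:ℕ) ≤ 2 ^ n := Nat.one_le_two_pow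
    have hmid : (fun t => nu (t + 1) + 1) ((2 ^ n - 1) + 0) = n + 1 := by
      simp only [Nat.add_zero]
      have : 2 ^ n - 1 + 1 = 2 ^ n := by omega
      rw [this, nu_two_pow]
    rw [show ((2 ^ n - 1) + 0) = (2 ^ n - 1) by omega] at hmid
    simp only [Function.comp_def]
    congr 1
    · simpa using hmid.symm
    · apply List.map_congr_left
      intro t ht
      simp only [List.mem_range] at ht
      have : 2 ^ n - 1 + (t + 1) + 1 = 2 ^ n + (t + 1) := by omega
      simp only [this]
      rw [nu_add_of_lt (dvd_refl _) (by omega) (by omega)]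

lemma zimin_length (n : ℕ) : (Zimin n).length = 2 ^ n - 1 := by
  rw [zimin_eq]; simp

lemma zimin_getD {n j : ℕ} (hj : j < 2 ^ n - 1) : (Zimin n).getD j 0 = nu (j + 1) + 1 := by
  rw [zimin_eq]
  rw [List.getD_eq_getElem _ _ (by simpa using hj)]
  simp

lemma insertAt_length {W : List ℕ} {p x : ℕ} (h : p ≤ W.length) :
    (insertAt W p x).length = W.length + 1 := by
  simp [insertAt]; omega

lemma insertAt_getD {W : List ℕ} {p x j : ℕ} (h : p ≤ W.length) :
    (insertAt W p x).getD j 0 =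
      if j < p then W.getD j 0 else if j = p then x else W.getD (j - 1) 0 := by
  have htl : (W.take p).length = p := by simp; omega
  rcases lt_trichotomy j p with hj | rfl | hj
  · rw [insertAt, List.getD_append _ _ _ _ (by omega), if_pos hj]
    rcases Nat.lt_or_ge j W.length with hjW | hjW
    · rw [List.getD_eq_getElem _ _ (by omega), List.getD_eq_getElem _ _ (by omega)]
      exact List.getElem_take
    · omega
  · rw [insertAt, List.getD_append_right _ _ _ _ (by omega), if_neg (by omega), if_pos rfl, htl]
    simp
  · rw [insertAt, List.getD_append_right _ _ _ _ (by omega), if_neg (by omega), if_neg (by omega),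
      htl]
    have : j - p = (j - p - 1) + 1 := by omega
    rw [this]
    show (W.drop p).getD (j - p - 1) 0 = W.getD (j - 1) 0
    rcases Nat.lt_or_ge (j-1) W.length with hjW | hjW
    · rw [List.getD_eq_getElem _ _ (by simp; omega), List.getD_eq_getElem _ _ (by omega)]
      rw [List.getElem_drop]
      congr 1
      omega
    · rw [List.getD_eq_default _ _ (by simp; omega), List.getD_eq_default _ _ (by omega)]

lemma take_drop_eq_map {W : List ℕ} {s L : ℕ} (h : s + L ≤ W.length) :
    (W.drop s).take L = (List.range L).map (fun t => W.getD (s + t) 0) := by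
  apply List.ext_getElem
  · simp; omega
  · intro t h1 h2
    simp only [List.getElem_map, List.getElem_range]
    rw [List.getElem_take, List.getElem_drop]
    rw [List.getD_eq_getElem _ _ (by simp at h1; omega)]

lemma hasSquare_iff (W : List ℕ) :
    HasSquare W ↔ ∃ s d, 1 ≤ d ∧ s + 2 * d ≤ W.length ∧
      ∀ t, t < d → W.getD (s + t) 0 = W.getD (s + t + d) 0 := by
  constructor
  · rintro ⟨X, hX, hinf⟩
    obtain ⟨U, V, hW⟩ := hinf
    have hXlen : 1 ≤ X.length := by
      rcases X with _ | ⟨a, X⟩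
      · exact absurd rfl hX
      · simp
    have hW' : W = U ++ (X ++ (X ++ V)) := by rw [← hW]; simp
    refine ⟨U.length, X.length, hXlen, by rw [hW']; simp; omega, ?_⟩
    intro t ht
    have e1 : W.getD (U.length + t) 0 = X.getD t 0 := by
      rw [hW', List.getD_append_right _ _ _ _ (by omega),
        Nat.add_sub_cancel_left, List.getD_append _ _ _ _ (by omega)]
    have e2 : W.getD (U.length + t + X.length) 0 = X.getD t 0 := by
      rw [hW', List.getD_append_right _ _ _ _ (by omega)]
      have : U.length + t + X.length - U.length = t + X.length := by omega
      rw [this, List.getD_append_right _ _ _ _ (by omega), Nat.add_sub_cancel,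
        List.getD_append _ _ _ _ (by omega)]
    rw [e1, e2]
  · rintro ⟨s, d, hd, hlen, hP⟩
    set f : ℕ → ℕ := fun t => W.getD (s + t) 0 with hf
    refine ⟨(List.range d).map f, ?_, ?_⟩
    · intro h
      have := congrArg List.length h
      simp at this; omega
    · have key : (W.drop s).take (2 * d) = (List.range d).map f ++ (List.range d).map f := by
        rw [take_drop_eq_map (by omega), two_mul, List.range_add, List.map_append, List.map_map]
        congr 1
        apply List.map_congr_left
        intro t ht
        simp only [List.mem_range] at ht
        simp only [Function.comp_apply, hf]
        have := hP t ht
        rw [show s + (d + t) = s + t + d by omega, ← this]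
      rw [← key]
      exact ((List.take_prefix _ _).isInfix).trans ((List.drop_suffix _ _).isInfix)

lemma nu_eq_iff_pow {n x : ℕ} (hn : 1 ≤ n) (hx : 1 ≤ x) (hx2 : x < 2 ^ n) :
    nu x = n - 1 ↔ x = 2 ^ (n - 1) := by
  constructor
  · intro h
    have hdvd : 2 ^ (n-1) ∣ x := by
      have := pow_padicValNat_dvd (p := 2) (n := x)
      rwa [show padicValNat 2 x = nu x from rfl, h] at this
    obtain ⟨c, hc⟩ := hdvd
    have hc1 : 1 ≤ c := by
      rcases Nat.eq_zero_or_pos c with rfl | h'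
      · omega
      · omega
    have h2 : (2:ℕ) ^ n = 2 ^ (n-1) * 2 := by
      rw [← pow_succ]; congr 1; omega
    have : c < 2 := by
      by_contra hcc
      push_neg at hcc
      have : 2 ^ (n-1) * 2 ≤ 2 ^ (n-1) * c := Nat.mul_le_mul_left _ hcc
      omega
    interval_cases c
    · simpa using hc
  · rintro rfl; exact nu_two_pow _

section Main
variable {n : ℕ}

/-- value function of the inserted word -/
def Fv (n i j : ℕ) : ℕ := if j = i then n else if j < i then nu (j + 1) + 1 else nu j + 1

lemma insert_getD_eq_Fv (hn : 2 ≤ n) {i : ℕ} (hi2 : i ≤ 2 ^ n - 2) {j : ℕ}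
    (hj : j < 2 ^ n) : (insertAt (Zimin n) i n).getD j 0 = Fv n i j := by
  have h1 : (1:ℕ) ≤ 2 ^ n := Nat.one_le_two_pow
  have h4 : (4:ℕ) ≤ 2 ^ n := by calc (4:ℕ) = 2^2 := by norm_num
                                   _ ≤ 2 ^ n := Nat.pow_le_pow_right (by norm_num) hn
  have hiZ : i ≤ (Zimin n).length := by rw [zimin_length]; omega
  rw [insertAt_getD hiZ]
  unfold Fv
  rcases lt_trichotomy j i with h | h | h
  · rw [if_pos h, if_neg (by omega), if_pos h, zimin_getD (by omega)]
  · rw [if_neg (by omega), if_pos h, if_pos h]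
  · rw [if_neg (by omega), if_neg (by omega), if_neg (by omega), if_neg (by omega)]
    rw [zimin_getD (by omega)]
    congr 2
    omega

lemma Fv_eq_n_iff (hn : 2 ≤ n) {i j : ℕ} (hi1 : 1 ≤ i) (hi2 : i ≤ 2 ^ n - 2)
    (hj : j < 2 ^ n) :
    Fv n i j = n ↔ j = i ∨ (i < 2 ^ (n-1) ∧ j = 2 ^ (n-1)) ∨
      (2 ^ (n-1) ≤ i ∧ j = 2 ^ (n-1) - 1) := by
  have h2m : 2 * 2 ^ (n-1) = 2 ^ n := by rw [← pow_succ']; congr 1; omega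
  have h1 : (1:ℕ) ≤ 2 ^ (n-1) := Nat.one_le_two_pow
  unfold Fv
  rcases lt_trichotomy j i with h | h | h
  · rw [if_neg (by omega), if_pos h]
    have : nu (j + 1) + 1 = n ↔ nu (j+1) = n - 1 := by omega
    rw [this, nu_eq_iff_pow (by omega) (by omega) (by omega)]
    constructor
    · intro hjm
      right; right
      constructor
      · omega
      · omega
    · rintro (h' | ⟨h', h''⟩ | ⟨h', h''⟩) <;> omega
  · simp [h]
  · rw [if_neg (by omega), if_neg (by omega)]
    have : nu j + 1 = n ↔ nu j = n - 1 := by omega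
    rw [this, nu_eq_iff_pow (by omega) (by omega) (by omega)]
    constructor
    · intro hjm
      right; left
      constructor
      · omega
      · exact hjm
    · rintro (h' | ⟨h', h''⟩ | ⟨h', h''⟩) <;> omega

end Main

lemma forward_dir {n i : ℕ} (hn : 2 ≤ n) (hi1 : 1 ≤ i) (hi2 : i ≤ 2 ^ n - 2)
    (h : HasSquare (insertAt (Zimin n) i n)) :
    ∃ k, k ≤ n - 2 ∧ (i = 2 ^ (n-1) - 2 ^ k ∨ i = 2 ^ (n-1) - 1 + 2 ^ k) := by
  set m := 2 ^ (n-1) with hm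
  have h2m : 2 * m = 2 ^ n := by rw [hm, ← pow_succ']; congr 1; omega
  have h1m : (1:ℕ) ≤ m := Nat.one_le_two_pow
  have h2mge : (2:ℕ) ≤ m := by
    calc (2:ℕ) = 2 ^ 1 := by norm_num
    _ ≤ 2 ^ (n-1) := Nat.pow_le_pow_right (by norm_num) (by omega)
  have hWlen : (insertAt (Zimin n) i n).length = 2 * m := by
    rw [insertAt_length (by rw [zimin_length]; omega), zimin_length]; omega
  rw [hasSquare_iff] at h
  obtain ⟨s, d, hd, hlen, hP⟩ := h
  rw [hWlen] at hlen
  have hQ : ∀ t, t < d → Fv n i (s + t) = Fv n i (s + t + d) := by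
    intro t ht
    have := hP t ht
    rwa [insert_getD_eq_Fv hn hi2 (by omega), insert_getD_eq_Fv hn hi2 (by omega)] at this
  -- value facts
  have hFn : ∀ j, j < 2 * m → (Fv n i j = n ↔ j = i ∨ (i < m ∧ j = m) ∨ (m ≤ i ∧ j = m - 1)) :=
    fun j hj => Fv_eq_n_iff hn hi1 hi2 (by omega)
  have hFlt : ∀ j, j < i → Fv n i j = nu (j + 1) + 1 := by
    intro j hj; unfold Fv; rw [if_neg (by omega), if_pos hj]
  have hFgt : ∀ j, i < j → Fv n i j = nu j + 1 := by
    intro j hj; unfold Fv; rw [if_neg (by omega), if_neg (by omega)]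
  -- case split on square location
  rcases Nat.lt_or_ge i s with hB | hsi
  · -- square strictly right of i
    exfalso
    apply lemSq (u := s) (d := d) (by omega) hd
    intro t ht
    have := hQ t ht
    rw [hFgt _ (by omega), hFgt _ (by omega)] at this
    omega
  rcases Nat.lt_or_ge i (s + 2 * d) with hin | hA
  swap
  · -- square strictly left of i
    exfalso
    apply lemSq (u := s + 1) (d := d) (by omega) hd
    intro t ht
    have := hQ t ht
    rw [hFlt _ (by omega), hFlt _ (by omega)] at this
    have e1 : s + t + 1 = s + 1 + t := by omega
    have e2 : s + t + d + 1 = s + 1 + t + d := by omega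
    rw [e1, e2] at this
    omega
  · -- i inside the square
    rcases Nat.lt_or_ge i m with him | him
    · -- left insertion : n's at i and m
      rcases Nat.lt_or_ge i (s + d) with hfirst | hsecond
      · -- i in first half, partner i + d must be m
        have ht1 : i - s < d := by omega
        have := hQ (i - s) ht1
        rw [show s + (i - s) = i from by omega] at this
        have hFi : Fv n i i = n := by unfold Fv; rw [if_pos rfl]
        rw [hFi] at this
        have := (hFn (i + d) (by omega)).mp this.symm
        have hid : i + d = m := by omega
        -- build H1 H2 and apply lgen
        have H1 : ∀ j, s + 1 ≤ j → j ≤ i → nu j = nu (j + (d - 1)) := by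
          intro j hj1 hj2
          have ht : j - 1 - s < d := by omega
          have := hQ (j - 1 - s) ht
          rw [show s + (j - 1 - s) = j - 1 from by omega] at this
          rw [hFlt _ (by omega), hFgt _ (by omega)] at this
          rw [show j - 1 + 1 = j from by omega] at this
          rw [show j - 1 + d = j + (d - 1) from by omega] at this
          omega
        have H2 : ∀ j, i + 1 ≤ j → j ≤ s + d - 1 → nu j = nu (j + d) := by
          intro j hj1 hj2
          have ht : j - s < d := by omega
          have := hQ (j - s) ht
          rw [show s + (j - s) = j from by omega] at this
          rw [hFgt _ (by omega), hFgt _ (by omega)] at this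
          omega
        obtain ⟨k, hk⟩ := lgen hd (by omega) (by omega) H1 H2 (by omega) (by omega)
        refine ⟨k, ?_, Or.inl (by omega)⟩
        by_contra hkn
        push_neg at hkn
        have : 2 ^ (n-1) ≤ 2 ^ k := Nat.pow_le_pow_right (by norm_num) (by omega)
        omega
      · -- i in second half : partner i - d must be an n-position < i, impossible on left
        exfalso
        have ht1 : i - s - d < d := by omega
        have := hQ (i - s - d) ht1
        rw [show s + (i - s - d) = i - d from by omega,
          show i - d + d = i from by omega] at this
        have hFi : Fv n i i = n := by unfold Fv; rw [if_pos rfl]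
        rw [hFi] at this
        have := (hFn (i - d) (by omega)).mp this
        omega
    · -- right insertion : n's at m-1 and i
      rcases Nat.lt_or_ge i (s + d) with hfirst | hsecond
      · -- i in first half : partner i + d > i must be n-position, impossible
        exfalso
        have ht1 : i - s < d := by omega
        have := hQ (i - s) ht1
        rw [show s + (i - s) = i from by omega] at this
        have hFi : Fv n i i = n := by unfold Fv; rw [if_pos rfl]
        rw [hFi] at this
        have := (hFn (i + d) (by omega)).mp this.symm
        omega
      · -- i in second half : partner i - d = m - 1
        have ht1 : i - s - d < d := by omega
        have := hQ (i - s - d) ht1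
        rw [show s + (i - s - d) = i - d from by omega,
          show i - d + d = i from by omega] at this
        have hFi : Fv n i i = n := by unfold Fv; rw [if_pos rfl]
        rw [hFi] at this
        have hpos := (hFn (i - d) (by omega)).mp this
        have hid : i - d = m - 1 := by omega
        have hdi : d ≤ i := by omega
        have him1 : i = m - 1 + d := by omega
        have hsm : s ≤ m - 1 := by omega
        have H2 : ∀ j, s + 1 ≤ j → j ≤ m - 1 → nu j = nu (j + d) := by
          intro j hj1 hj2
          have ht : j - 1 - s < d := by omega
          have := hQ (j - 1 - s) ht
          rw [show s + (j - 1 - s) = j - 1 from by omega] at this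
          rw [hFlt _ (by omega), hFlt _ (by omega)] at this
          rw [show j - 1 + 1 = j from by omega] at this
          rw [show j - 1 + d + 1 = j + d from by omega] at this
          omega
        have H1 : ∀ j, m + 1 ≤ j → j ≤ s + d → nu j = nu (j + (d - 1)) := by
          intro j hj1 hj2
          have ht : j - 1 - s < d := by omega
          have := hQ (j - 1 - s) ht
          rw [show s + (j - 1 - s) = j - 1 from by omega] at this
          rw [hFlt _ (by omega), hFgt _ (by omega)] at this
          rw [show j - 1 + 1 = j from by omega] at this
          rw [show j - 1 + d = j + (d - 1) from by omega] at this
          omega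
        obtain ⟨k, hk⟩ := lgen hd (by omega) (by omega) H1 H2 (by omega) (by omega)
        refine ⟨k, ?_, Or.inr (by omega)⟩
        by_contra hkn
        push_neg at hkn
        have : 2 ^ (n-1) ≤ 2 ^ k := Nat.pow_le_pow_right (by norm_num) (by omega)
        omega

lemma backward_dir {n k : ℕ} (hn : 2 ≤ n) (hk : k ≤ n - 2) :
    HasSquare (insertAt (Zimin n) (2 ^ (n-1) - 2 ^ k) n) ∧
    HasSquare (insertAt (Zimin n) (2 ^ (n-1) - 1 + 2 ^ k) n) := by
  set m := 2 ^ (n-1) with hm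
  have h2m : 2 * m = 2 ^ n := by rw [hm, ← pow_succ']; congr 1; omega
  have h1m : (1:ℕ) ≤ m := Nat.one_le_two_pow
  have h1k : (1:ℕ) ≤ 2 ^ k := Nat.one_le_two_pow
  have hkm : 2 ^ k ≤ 2 ^ (n-2) := Nat.pow_le_pow_right (by norm_num) hk
  have hn2m : 2 * 2 ^ (n-2) = m := by rw [hm, ← pow_succ']; congr 1; omega
  have h1n2 : (1:ℕ) ≤ 2 ^ (n-2) := Nat.one_le_two_pow
  have hdvd_m : 2 ^ k ∣ m := by
    rw [hm]
    exact pow_dvd_pow 2 (by omega)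
  have hdvd_mk : 2 ^ k ∣ m - 2 ^ k := by
    exact Nat.dvd_sub hdvd_m dvd_rfl
  constructor
  · -- i = m - 2^k, square at s = i, d = 2^k
    set i := m - 2 ^ k with hi
    have hi2 : i ≤ 2 ^ n - 2 := by omega
    have hWlen : (insertAt (Zimin n) i n).length = 2 * m := by
      rw [insertAt_length (by rw [zimin_length]; omega), zimin_length]; omega
    rw [hasSquare_iff]
    refine ⟨i, 2 ^ k, h1k, by omega, ?_⟩
    intro t ht
    rw [insert_getD_eq_Fv hn hi2 (by omega), insert_getD_eq_Fv hn hi2 (by omega)]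
    rcases Nat.eq_zero_or_pos t with rfl | ht1
    · -- t = 0 : n vs value at m
      have e1 : Fv n i (i + 0) = n := by unfold Fv; rw [show i + 0 = i from rfl, if_pos rfl]
      have e2 : Fv n i (i + 0 + 2 ^ k) = n := by
        unfold Fv
        rw [show i + 0 + 2 ^ k = m from by omega]
        rw [if_neg (by omega), if_neg (by omega), hm, nu_two_pow]
        omega
      rw [e1, e2]
    · have e1 : Fv n i (i + t) = nu t + 1 := by
        unfold Fv
        rw [if_neg (by omega), if_neg (by omega)]
        rw [show i + t = (m - 2^k) + t from by omega]
        rw [nu_add_of_lt hdvd_mk ht1 ht]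
      have e2 : Fv n i (i + t + 2 ^ k) = nu t + 1 := by
        unfold Fv
        rw [if_neg (by omega), if_neg (by omega)]
        rw [show i + t + 2 ^ k = m + t from by omega]
        rw [nu_add_of_lt hdvd_m ht1 ht]
      rw [e1, e2]
  · -- i = m - 1 + 2^k, square at s = m - 2^k, d = 2^k
    set i := m - 1 + 2 ^ k with hi
    have hi2 : i ≤ 2 ^ n - 2 := by omega
    have hWlen : (insertAt (Zimin n) i n).length = 2 * m := by
      rw [insertAt_length (by rw [zimin_length]; omega), zimin_length]; omega
    rw [hasSquare_iff]
    refine ⟨m - 2 ^ k, 2 ^ k, h1k, by omega, ?_⟩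
    intro t ht
    rw [insert_getD_eq_Fv hn hi2 (by omega), insert_getD_eq_Fv hn hi2 (by omega)]
    rcases Nat.lt_or_ge t (2 ^ k - 1) with htl | hte
    · have e1 : Fv n i (m - 2 ^ k + t) = nu (t + 1) + 1 := by
        unfold Fv
        rw [if_neg (by omega), if_pos (by omega)]
        rw [show m - 2 ^ k + t + 1 = (m - 2^k) + (t+1) from by omega]
        rw [nu_add_of_lt hdvd_mk (by omega) (by omega)]
      have e2 : Fv n i (m - 2 ^ k + t + 2 ^ k) = nu (t + 1) + 1 := by
        unfold Fv
        rw [if_neg (by omega), if_pos (by omega)]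
        rw [show m - 2 ^ k + t + 2 ^ k + 1 = m + (t+1) from by omega]
        rw [nu_add_of_lt hdvd_m (by omega) (by omega)]
      rw [e1, e2]
    · have hte' : t = 2 ^ k - 1 := by omega
      have e1 : Fv n i (m - 2 ^ k + t) = n := by
        unfold Fv
        rw [if_neg (by omega), if_pos (by omega)]
        rw [show m - 2 ^ k + t + 1 = m from by omega, hm, nu_two_pow]
        omega
      have e2 : Fv n i (m - 2 ^ k + t + 2 ^ k) = n := by
        unfold Fv
        rw [if_pos (by omega)]
      rw [e1, e2]

theorem zimin_internal_n_insertions (n : ℕ) (hn : 2 ≤ n) :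
    {i : ℕ | 1 ≤ i ∧ i ≤ 2 ^ n - 2 ∧ SquareFree (insertAt (Zimin n) i n)}.ncard
      = (2 ^ n - 2) - 2 * (n - 1) := by
  set m := 2 ^ (n-1) with hm
  have h2m : 2 * m = 2 ^ n := by rw [hm, ← pow_succ']; congr 1; omega
  have h1m : (1:ℕ) ≤ m := Nat.one_le_two_pow
  have h2mge : (2:ℕ) ≤ m := by
    calc (2:ℕ) = 2 ^ 1 := by norm_num
    _ ≤ 2 ^ (n-1) := Nat.pow_le_pow_right (by norm_num) (by omega)
  have hn2m : 2 * 2 ^ (n-2) = m := by rw [hm, ← pow_succ']; congr 1; omega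
  have h1n2 : (1:ℕ) ≤ 2 ^ (n-2) := Nat.one_le_two_pow
  set B : Finset ℕ := ((Finset.range (n-1)).image fun k => m - 2 ^ k) ∪
    ((Finset.range (n-1)).image fun k => m - 1 + 2 ^ k) with hB
  have hpowle : ∀ k, k < n - 1 → 2 ^ k ≤ 2 ^ (n-2) :=
    fun k hk => Nat.pow_le_pow_right (by norm_num) (by omega)
  have hmemB : ∀ i, i ∈ B ↔ ∃ k, k ≤ n - 2 ∧ (i = m - 2 ^ k ∨ i = m - 1 + 2 ^ k) := by
    intro i
    rw [hB]
    simp only [Finset.mem_union, Finset.mem_image, Finset.mem_range]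
    constructor
    · rintro (⟨k, hk, rfl⟩ | ⟨k, hk, rfl⟩)
      · exact ⟨k, by omega, Or.inl rfl⟩
      · exact ⟨k, by omega, Or.inr rfl⟩
    · rintro ⟨k, hk, rfl | rfl⟩
      · exact Or.inl ⟨k, by omega, rfl⟩
      · exact Or.inr ⟨k, by omega, rfl⟩
  have hset : {i : ℕ | 1 ≤ i ∧ i ≤ 2 ^ n - 2 ∧ SquareFree (insertAt (Zimin n) i n)}
      = ↑((Finset.Icc 1 (2 ^ n - 2)) \ B) := by
    ext i
    simp only [Set.mem_setOf_eq, Finset.coe_sdiff, Set.mem_diff, Finset.coe_Icc,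
      Set.mem_Icc, Finset.mem_coe]
    constructor
    · rintro ⟨h1, h2, h3⟩
      refine ⟨⟨h1, h2⟩, ?_⟩
      rw [hmemB]
      rintro ⟨k, hk, rfl | rfl⟩
      · exact h3 (backward_dir hn hk).1
      · exact h3 (backward_dir hn hk).2
    · rintro ⟨⟨h1, h2⟩, hnB⟩
      refine ⟨h1, h2, ?_⟩
      intro hsq
      apply hnB
      rw [hmemB]
      exact forward_dir hn h1 h2 hsq
  rw [hset, Set.ncard_coe_finset]
  have hsub : B ⊆ Finset.Icc 1 (2 ^ n - 2) := by
    intro i hi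
    rw [hmemB] at hi
    obtain ⟨k, hk, hik⟩ := hi
    have h1 := hpowle k (by omega)
    have h2 := Nat.one_le_two_pow (n := k)
    rw [Finset.mem_Icc]
    omega
  rw [Finset.card_sdiff_of_subset hsub, Nat.card_Icc]
  have hBcard : B.card = 2 * (n - 1) := by
    rw [hB, Finset.card_union_of_disjoint, Finset.card_image_of_injOn,
      Finset.card_image_of_injOn, Finset.card_range]
    · omega
    · intro a ha b hb hab
      simp only [Finset.mem_coe, Finset.mem_range] at ha hb
      have hab' : m - 1 + 2 ^ a = m - 1 + 2 ^ b := hab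
      have h1 := hpowle a ha
      have h2 := hpowle b hb
      have : (2:ℕ) ^ a = 2 ^ b := by omega
      exact Nat.pow_right_injective le_rfl this
    · intro a ha b hb hab
      simp only [Finset.mem_coe, Finset.mem_range] at ha hb
      have hab' : m - 2 ^ a = m - 2 ^ b := hab
      have h1 := hpowle a ha
      have h2 := hpowle b hb
      have : (2:ℕ) ^ a = 2 ^ b := by omega
      exact Nat.pow_right_injective le_rfl this
    · rw [Finset.disjoint_left]
      intro x hx1 hx2
      simp only [Finset.mem_image, Finset.mem_range] at hx1 hx2
      obtain ⟨a, ha, hxa⟩ := hx1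
      obtain ⟨b, hb, hxb⟩ := hx2
      have hxa' : m - 2 ^ a = x := hxa
      have hxb' : m - 1 + 2 ^ b = x := hxb
      have h1 := hpowle a ha
      have h2 := Nat.one_le_two_pow (n := a)
      have h3 := Nat.one_le_two_pow (n := b)
      omega
  rw [hBcard]
  omega
end

section
/- For every n ≥ 1 and every nonempty factor F of the Zimin word Z_n, the letter of maximum value occurring in F occurs exactly once in F. -/
lemma mem_Zimin_le {a n : ℕ} (h : a ∈ Zimin n) : a ≤ n := by
  induction n with
  | zero => simp [Zimin] at h
  | succ m ih =>
    simp only [Zimin, List.mem_append, List.mem_cons] at h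
    rcases h with h | h | h
    · exact (ih h).trans (Nat.le_succ m)
    · omega
    · exact (ih h).trans (Nat.le_succ m)

lemma prefix_split {α : Type*} {p l r : List α} {x : α}
    (h : p <+: l ++ x :: r) (hx : x ∉ p) : p <+: l := by
  induction l generalizing p with
  | nil =>
    cases p with
    | nil => exact List.nil_prefix
    | cons a p' =>
      obtain ⟨t, ht⟩ := h
      simp at ht
      exact absurd (ht.1 ▸ (List.mem_cons_self : a ∈ a :: p')) hx
  | cons b l' ih =>
    cases p with
    | nil => exact List.nil_prefix
    | cons a p' =>
      obtain ⟨t, ht⟩ := h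
      simp only [List.cons_append] at ht
      injection ht with h1 h2
      subst h1
      have : p' <+: l' := ih ⟨t, h2⟩ (fun hm => hx (List.mem_cons_of_mem _ hm))
      exact (List.prefix_cons_inj a).mpr this

lemma infix_split_s17 {α : Type*} {F l r : List α} {x : α}
    (h : F <:+: l ++ x :: r) (hx : x ∉ F) : F <:+: l ∨ F <:+: r := by
  induction l generalizing F with
  | nil =>
    obtain ⟨s, t, hst⟩ := h
    cases s with
    | nil =>
      simp only [List.nil_append] at hst
      cases F with
      | nil => exact Or.inl (List.nil_infix)
      | cons a F' =>
        simp only [List.cons_append] at hst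
        injection hst with h1 h2
        exact absurd (h1 ▸ (List.mem_cons_self : a ∈ a :: F')) hx
    | cons y s' =>
      simp only [List.cons_append, List.nil_append] at hst
      injection hst with h1 h2
      exact Or.inr ⟨s', t, h2⟩
  | cons b l' ih =>
    obtain ⟨s, t, hst⟩ := h
    cases s with
    | nil =>
      simp only [List.nil_append, List.cons_append] at hst
      have hp : F <+: b :: (l' ++ x :: r) := ⟨t, hst⟩
      cases F with
      | nil => exact Or.inl (List.nil_infix)
      | cons a F' =>
        obtain ⟨t', ht'⟩ := hp
        simp only [List.cons_append] at ht'
        injection ht' with h1 h2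
        subst h1
        have : F' <+: l' :=
          prefix_split ⟨t', h2⟩ (fun hm => hx (List.mem_cons_of_mem _ hm))
        exact Or.inl (((List.prefix_cons_inj a).mpr this).isInfix)
    | cons y s' =>
      simp only [List.cons_append] at hst
      injection hst with h1 h2
      rcases ih ⟨s', t, h2⟩ hx with h | h
      · exact Or.inl (h.trans (List.infix_cons_iff.mpr (Or.inr (List.infix_refl _))))
      · exact Or.inr h

lemma count_Zimin_succ (n : ℕ) : (Zimin (n + 1)).count (n + 1) = 1 := by
  have hz : (Zimin n).count (n + 1) = 0 := by
    rw [List.count_eq_zero]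
    intro hmem
    exact absurd (mem_Zimin_le hmem) (by omega)
  simp [Zimin, List.count_append, List.count_cons, hz]

theorem zimin_factor_max_unique (n : ℕ) (hn : 1 ≤ n)
    (F : List ℕ) (hne : F ≠ []) (hF : F <:+: Zimin n)
    (M : ℕ) (hM : M ∈ F) (hmax : ∀ a ∈ F, a ≤ M) :
    F.count M = 1 := by
  clear hn
  induction n generalizing F with
  | zero => simp [Zimin] at hF; exact absurd hF hne
  | succ m ih =>
    by_cases hmem : (m + 1) ∈ F
    · have hMeq : M = m + 1 := by
        have h1 : M ≤ m + 1 := mem_Zimin_le (hF.subset hM)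
        have h2 : m + 1 ≤ M := hmax _ hmem
        omega
      subst hMeq
      have hle : F.count (m + 1) ≤ (Zimin (m + 1)).count (m + 1) :=
        hF.sublist.count_le _
      rw [count_Zimin_succ] at hle
      have hge : 1 ≤ F.count (m + 1) := by rw [Nat.one_le_iff_ne_zero, Ne, List.count_eq_zero]; exact fun h => h hmem
      omega
    · rcases infix_split_s17 (hF : F <:+: Zimin m ++ (m + 1) :: Zimin m) hmem with h | h
      · exact ih F hne h hM hmax
      · exact ih F hne h hM hmax
end
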